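/- Let G be a group, A a free factor of G, N a characteristic subgroup of G, and suppose φ is an automorphism of A. Then φ(N ∩ A) = N ∩ A; that is, N ∩ A is a characteristic subgroup of A. -/

import Mathlib

/-- `A ≤ G` is a free factor of `G` if `G` is the internal free product of `A` and some
subgroup `B`, i.e. there is an isomorphism `A ∗ B ≃* G` restricting to the inclusions. -/
def Subgroup.IsFreeFactor {G : Type*} [Group G] (A : Subgroup G) : Prop :=
  ∃ B : Subgroup G, ∃ e : Monoid.Coprod A B ≃* G,
    (∀ a : A, e (Monoid.Coprod.inl a) = (a : G)) ∧
    (∀ b : B, e (Monoid.Coprod.inr b) = (b : G))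

/-- If `A` is a free factor of `G` and `N ≤ G` is characteristic, then `N ∩ A` is a
characteristic subgroup of `A`: every automorphism `φ` of `A` satisfies
`φ(N ∩ A) = N ∩ A`. -/
theorem inter_characteristic_of_free_factor {G : Type*} [Group G]
    (A : Subgroup G) (hA : A.IsFreeFactor) (N : Subgroup G) [N.Characteristic]
    (φ : A ≃* A) :
    Subgroup.map φ.toMonoidHom ((N ⊓ A).subgroupOf A) = (N ⊓ A).subgroupOf A := by
  obtain ⟨B, e, he, -⟩ := hA
  -- extend φ to an automorphism ψ of G
  let ψ : G ≃* G := (e.symm.trans (MulEquiv.coprodCongr φ (MulEquiv.refl B))).trans e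
  have hψ : ∀ a : A, ψ (a : G) = (φ a : G) := fun a => by
    simp only [ψ, MulEquiv.trans_apply]
    rw [← he a, e.symm_apply_apply]
    rw [show (MulEquiv.coprodCongr φ (MulEquiv.refl B)) (Monoid.Coprod.inl a)
        = Monoid.Coprod.inl (φ a) from rfl, he]
  have hN : ∀ x : G, ψ x ∈ N ↔ x ∈ N := fun x => by
    have := Subgroup.characteristic_iff_comap_eq.mp ‹N.Characteristic› ψ
    conv_rhs => rw [← this, Subgroup.mem_comap]
    rfl
  ext x
  simp only [Subgroup.mem_map, Subgroup.mem_subgroupOf, Subgroup.mem_inf]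
  constructor
  · rintro ⟨y, ⟨hy, -⟩, rfl⟩
    refine ⟨?_, (φ y).2⟩
    rw [show ((φ.toMonoidHom y : A) : G) = ψ (y : G) from (hψ y).symm]
    exact (hN _).2 hy
  · rintro ⟨hx, -⟩
    refine ⟨φ.symm x, ⟨?_, (φ.symm x).2⟩, by simp⟩
    have : ψ ((φ.symm x : A) : G) = (x : G) := by rw [hψ]; simp
    rw [← hN]
    rw [this]; exact hx
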